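/- In the setting of the previous lemma (A = B[z1,z2,t]/(z1z2), Gm-equivariant quotient φ: R = A^{⊕m} → M with M flat over k[t]): let A^- = A/(z2), R^- = R ⊗_A A^-, K^- = ker(R^- → M ⊗_A A^-); define C_gen ⊂ B^{⊕m} as the B-submodule such that C_gen ⊗_B B[t, t^{-1}] equals the image of ((K^-_{(t)})_{(z1)} ∩ R^-_{(t)}) ⊗ A^-_{(t)}/(z1) inside B[t,t^{-1}]^{⊕m}; analogously define C_0 ⊂ B^{⊕m} from K_0^- = ker(R_0^- → M_0^-) at t = 0 as ((K_0^-)_{(z1)} ∩ R_0^-) ⊗ A_0^- /(z1). Then C_0 = C_gen as B-submodules of B^{⊕m}. -/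

import Mathlib

set_option maxHeartbeats 2000000
set_option synthInstance.maxHeartbeats 400000

open Pointwise in
theorem aux_lemma (B : Type) [CommRing B] (A : Type) [CommRing A] [Algebra B A]
    (z₁ z₂ t : A) (hzz : z₁ * z₂ = 0)
    (hA : ∀ α : A, α ∈ Submodule.span B {x : A | ∃ p q r : ℕ, x = z₁ ^ p * z₂ ^ r * t ^ q})
    (a b : ℤ) (ha : 0 < a) (hb : b < 0) (m : ℕ)
    (M : Type) [AddCommGroup M] [Module A M] [Module B M] [IsScalarTower B A M]
    (Mgr : ℤ → Submodule B M)
    (hInt : DirectSum.IsInternal Mgr)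
    (h1 : ∀ l, ∀ x ∈ Mgr l, z₁ • x ∈ Mgr (l + a))
    (h2 : ∀ l, ∀ x ∈ Mgr l, z₂ • x ∈ Mgr l)
    (h3 : ∀ l, ∀ x ∈ Mgr l, t • x ∈ Mgr (l + b))
    (φ : (Fin m → A) →ₗ[A] M) (hsurj : Function.Surjective φ)
    (hgen : ∀ i, φ (Pi.single i 1) ∈ Mgr 0)
    (hreg : ∀ x : M, t • x = 0 → x = 0) :
    {c : Fin m → B | ∃ (n i : ℕ) (w : Fin m → A),
        ((z₁ ^ n * t ^ i) • fun j => algebraMap B A (c j)) + z₁ ^ (n + 1) • w ∈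
          LinearMap.ker φ ⊔ (Ideal.span {z₂} • (⊤ : Submodule A (Fin m → A)))} =
      {c : Fin m → B | ∃ (n : ℕ) (w : Fin m → A),
        (z₁ ^ n • fun j => algebraMap B A (c j)) + z₁ ^ (n + 1) • w ∈
          LinearMap.ker φ ⊔ (Ideal.span {z₂, t} • (⊤ : Submodule A (Fin m → A)))} := by
  classical
  haveI : DirectSum.Decomposition Mgr := hInt.chooseDecomposition
  -- the graded projections
  set π : ℤ → M → M := fun d x => ((DirectSum.decompose Mgr x) d : M) with hπdef
  have π_mem : ∀ d x, π d x ∈ Mgr d := fun d x => ((DirectSum.decompose Mgr x) d).2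
  have π_same : ∀ d x, x ∈ Mgr d → π d x = x := fun d x hx =>
    DirectSum.decompose_of_mem_same Mgr hx
  have π_ne : ∀ d e (x : M), x ∈ Mgr e → e ≠ d → π d x = 0 := fun d e x hx hne =>
    DirectSum.decompose_of_mem_ne Mgr hx hne
  have π_zero : ∀ d, π d 0 = 0 := by
    intro d; simp [hπdef]
  have π_add : ∀ d (x y : M), π d (x + y) = π d x + π d y := by
    intro d x y; simp [hπdef, DirectSum.decompose_add]
  -- commutation of projections with homogeneous scalars
  have hcomm : ∀ (α : A) (s : ℤ), (∀ l, ∀ x ∈ Mgr l, α • x ∈ Mgr (l + s)) →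
      ∀ (d : ℤ) (x : M), π d (α • x) = α • π (d - s) x := by
    intro α s hα d x
    induction x using DirectSum.Decomposition.inductionOn Mgr with
    | zero => rw [smul_zero, π_zero, π_zero, smul_zero]
    | @homogeneous e y =>
      have hy : (y : M) ∈ Mgr e := y.2
      have hαy : α • (y : M) ∈ Mgr (e + s) := hα e _ hy
      by_cases h : e + s = d
      · rw [π_same d _ (h ▸ hαy), π_same (d - s) _ (by rw [← h]; simpa using hy)]
      · rw [π_ne d (e + s) _ hαy h, π_ne (d - s) e _ hy (by omega), smul_zero]
    | add x y hx hy => rw [smul_add, π_add, π_add, hx, hy, smul_add]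
  -- iterated shift lemmas
  have hz₁p : ∀ (p : ℕ) l, ∀ x ∈ Mgr l, z₁ ^ p • x ∈ Mgr (l + p * a) := by
    intro p
    induction p with
    | zero => intro l x hx; simpa using hx
    | succ p ih =>
      intro l x hx
      have h' := ih _ _ (h1 _ _ hx)
      rw [pow_succ, mul_smul]
      convert h' using 2
      push_cast; ring
  have hz₂p : ∀ (r : ℕ) l, ∀ x ∈ Mgr l, z₂ ^ r • x ∈ Mgr l := by
    intro r
    induction r with
    | zero => intro l x hx; simpa using hx
    | succ r ih =>
      intro l x hx
      have h' := ih _ _ (h2 _ _ hx)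
      rw [pow_succ, mul_smul]
      exact h'
  have htp : ∀ (q : ℕ) l, ∀ x ∈ Mgr l, t ^ q • x ∈ Mgr (l + q * b) := by
    intro q
    induction q with
    | zero => intro l x hx; simpa using hx
    | succ q ih =>
      intro l x hx
      have h' := ih _ _ (h3 _ _ hx)
      rw [pow_succ, mul_smul]
      convert h' using 2
      push_cast; ring
  have hmono : ∀ (p q r : ℕ) l, ∀ x ∈ Mgr l,
      (z₁ ^ p * z₂ ^ r * t ^ q) • x ∈ Mgr (l + p * a + q * b) := by
    intro p q r l x hx
    rw [mul_smul, mul_smul]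
    have h' := hz₁p p _ _ (hz₂p r _ _ (htp q _ _ hx))
    convert h' using 2
    ring
  have hmono' : ∀ (p q : ℕ) l, ∀ x ∈ Mgr l,
      (z₁ ^ p * t ^ q) • x ∈ Mgr (l + ((p : ℤ) * a + (q : ℤ) * b)) := by
    intro p q l x hx
    have h' := hmono p q 0 l x hx
    rw [pow_zero, mul_one] at h'
    convert h' using 2
    ring
  have hcomm_mono : ∀ (p q : ℕ) (d : ℤ) (x : M),
      π d ((z₁ ^ p * t ^ q) • x) = (z₁ ^ p * t ^ q) • π (d - ((p : ℤ) * a + (q : ℤ) * b)) x :=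
    fun p q => hcomm _ _ (hmono' p q)
  -- the span of "monomial times generator" elements of a given degree
  set P : ℤ → Submodule B M := fun d => Submodule.span B
    {x | ∃ (p q r : ℕ) (j : Fin m), (p : ℤ) * a + (q : ℤ) * b = d ∧
      x = (z₁ ^ p * z₂ ^ r * t ^ q) • φ (Pi.single j 1)} with hPdef
  have G1 : ∀ d, P d ≤ Mgr d := by
    intro d
    rw [hPdef]
    apply Submodule.span_le.mpr
    rintro x ⟨p, q, r, j, hd, rfl⟩
    have h' := hmono p q r 0 _ (hgen j)
    rwa [zero_add, hd] at h'
  have G2 : ∀ x : M, x ∈ ⨆ d, P d := by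
    intro x
    obtain ⟨v, rfl⟩ := hsurj x
    have hv : v = ∑ j, Pi.single j (v j) := (Finset.univ_sum_single v).symm
    rw [hv, map_sum]
    apply Submodule.sum_mem
    intro j _
    have hsingle : Pi.single j (v j) = v j • (Pi.single j (1 : A) : Fin m → A) := by
      have h' := Pi.single_smul (f := fun _ : Fin m => A) j (v j) (1 : A)
      rw [smul_eq_mul, mul_one] at h'
      exact h'
    rw [hsingle, map_smul]
    refine Submodule.span_induction ?_ ?_ ?_ ?_ (hA (v j))
    · rintro α ⟨p, qq, rr, rfl⟩
      exact Submodule.mem_iSup_of_mem ((p : ℤ) * a + (qq : ℤ) * b)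
        (Submodule.subset_span ⟨p, qq, rr, j, rfl, rfl⟩)
    · rw [zero_smul]; exact zero_mem _
    · intro α β _ _ hα hβ; rw [add_smul]; exact add_mem hα hβ
    · intro c α _ hα; rw [smul_assoc]; exact Submodule.smul_mem _ _ hα
  have G3 : ∀ d (x : M), x ∈ Mgr d → x ∈ P d := by
    intro d x hx
    have key : ∀ y : M, y ∈ ⨆ e, P e → ∀ d', π d' y ∈ P d' := by
      intro y hy
      refine Submodule.iSup_induction (motive := fun z => ∀ d', π d' z ∈ P d') P hy ?_ ?_ ?_
      · intro e z hz d'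
        by_cases h : e = d'
        · rw [π_same d' z (h ▸ G1 e hz)]; exact h ▸ hz
        · rw [π_ne d' e z (G1 e hz) h]; exact zero_mem _
      · intro d'; rw [π_zero]; exact zero_mem _
      · intro y₁ y₂ hy₁ hy₂ d'; rw [π_add]; exact add_mem (hy₁ d') (hy₂ d')
    have h' := key x (G2 x) d
    rwa [π_same d x hx] at h'
  have F1 : ∀ d, d < 0 → ∀ x ∈ P d, ∃ y, x = t • y := by
    intro d hd x hx
    rw [hPdef] at hx
    refine Submodule.span_induction ?_ ?_ ?_ ?_ hx
    · rintro x ⟨p, q, r, j, hpq, rfl⟩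
      match q with
      | 0 =>
        exfalso
        have : (0 : ℤ) ≤ (p : ℤ) * a := mul_nonneg (Int.natCast_nonneg p) (le_of_lt ha)
        simp only [Nat.cast_zero, zero_mul, add_zero] at hpq
        omega
      | q + 1 =>
        refine ⟨(z₁ ^ p * z₂ ^ r * t ^ q) • φ (Pi.single j 1), ?_⟩
        rw [smul_smul]
        congr 1
        ring
    · exact ⟨0, by rw [smul_zero]⟩
    · rintro x y _ _ ⟨y₁, rfl⟩ ⟨y₂, rfl⟩
      exact ⟨y₁ + y₂, by rw [smul_add]⟩
    · rintro c x _ ⟨y, rfl⟩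
      exact ⟨c • y, by rw [smul_comm]⟩
  have F2 : ∀ (n : ℕ) (d : ℤ), (n : ℤ) * a < d → ∀ x ∈ P d, ∃ y, x = z₁ ^ (n + 1) • y := by
    intro n d hd x hx
    rw [hPdef] at hx
    refine Submodule.span_induction ?_ ?_ ?_ ?_ hx
    · rintro x ⟨p, q, r, j, hpq, rfl⟩
      have hqb : (q : ℤ) * b ≤ 0 := mul_nonpos_of_nonneg_of_nonpos (Int.natCast_nonneg q) (le_of_lt hb)
      have hp : (n : ℤ) * a < (p : ℤ) * a := by omega
      have hpn : n + 1 ≤ p := by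
        have : (n : ℤ) < (p : ℤ) := lt_of_mul_lt_mul_right (by linarith) (le_of_lt ha)
        omega
      obtain ⟨p', rfl⟩ : ∃ p', p = (n + 1) + p' := ⟨p - (n + 1), by omega⟩
      refine ⟨(z₁ ^ p' * z₂ ^ r * t ^ q) • φ (Pi.single j 1), ?_⟩
      rw [smul_smul, pow_add]
      congr 1
      ring
    · exact ⟨0, by rw [smul_zero]⟩
    · rintro x y _ _ ⟨y₁, rfl⟩ ⟨y₂, rfl⟩
      exact ⟨y₁ + y₂, by rw [smul_add]⟩
    · rintro c x _ ⟨y, rfl⟩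
      exact ⟨c • y, by rw [smul_comm]⟩
  -- image of a constant vector is homogeneous of degree 0
  have hφc : ∀ c : Fin m → B, φ (fun j => algebraMap B A (c j)) ∈ Mgr 0 := by
    intro c
    have hc : (fun j => algebraMap B A (c j)) = ∑ j, Pi.single j (algebraMap B A (c j)) :=
      (Finset.univ_sum_single _).symm
    rw [hc, map_sum]
    apply Submodule.sum_mem
    intro j _
    have hsingle : Pi.single j (algebraMap B A (c j)) = algebraMap B A (c j) • (Pi.single j (1 : A) : Fin m → A) := by
      have h' := Pi.single_smul (f := fun _ : Fin m => A) j (algebraMap B A (c j)) (1 : A)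
      rw [smul_eq_mul, mul_one] at h'
      exact h'
    rw [hsingle, map_smul, algebraMap_smul]
    exact Submodule.smul_mem _ _ (hgen j)
  -- ==== main argument ====
  apply Set.eq_of_subset_of_subset
  -- Direction 1: C_gen ⊆ C₀
  · rintro c ⟨n, i, w, hmem⟩
    rw [Submodule.mem_sup] at hmem
    obtain ⟨κ, hκ, ρ, hρ, heq⟩ := hmem
    rw [Submodule.ideal_span_singleton_smul, ← SetLike.mem_coe,
      Submodule.coe_pointwise_smul] at hρ
    obtain ⟨y, -, rfl⟩ := hρ
    have E : (z₁ ^ n * t ^ i) • φ (fun j => algebraMap B A (c j)) + z₁ ^ (n + 1) • φ w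
        = z₂ • φ y := by
      have h' := congrArg φ heq.symm
      simpa only [map_add, map_smul, LinearMap.mem_ker.mp hκ, zero_add] using h'
    have E1 : (z₁ ^ (n + 1) * t ^ i) • φ (fun j => algebraMap B A (c j))
        = z₁ ^ (n + 1 + 1) • (- φ w) := by
      have h' := congrArg (fun v : M => z₁ • v) E
      simp only [smul_smul, smul_add] at h'
      rw [show z₁ * (z₁ ^ n * t ^ i) = z₁ ^ (n + 1) * t ^ i by ring,
          show z₁ * z₁ ^ (n + 1) = z₁ ^ (n + 1 + 1) by ring,
          hzz, zero_smul] at h'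
      rw [smul_neg]
      exact eq_neg_of_add_eq_zero_left h'
    have KEY : ∀ (i : ℕ) (u : M),
        (z₁ ^ (n + 1) * t ^ i) • φ (fun j => algebraMap B A (c j)) = z₁ ^ (n + 1 + 1) • u →
        ∃ u', z₁ ^ (n + 1) • φ (fun j => algebraMap B A (c j)) = z₁ ^ (n + 1 + 1) • u' := by
      intro i
      induction i with
      | zero => intro u hu; exact ⟨u, by simpa using hu⟩
      | succ i ih =>
        intro u hu
        have hL : (z₁ ^ (n + 1) * t ^ (i + 1)) • φ (fun j => algebraMap B A (c j)) ∈
            Mgr (((n : ℤ) + 1) * a + ((i : ℤ) + 1) * b) := by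
          have h' := hmono' (n + 1) (i + 1) 0 _ (hφc c)
          rw [zero_add] at h'
          convert h' using 2
          push_cast; ring
        have hproj := congrArg (π (((n : ℤ) + 1) * a + ((i : ℤ) + 1) * b)) hu
        rw [π_same _ _ hL] at hproj
        have hR : π (((n : ℤ) + 1) * a + ((i : ℤ) + 1) * b) (z₁ ^ (n + 1 + 1) • u)
            = z₁ ^ (n + 1 + 1) • π (((i : ℤ) + 1) * b - a) u := by
          have h' := hcomm_mono (n + 1 + 1) 0 (((n : ℤ) + 1) * a + ((i : ℤ) + 1) * b) u
          rw [pow_zero, mul_one] at h'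
          convert h' using 3
          push_cast; ring
        rw [hR] at hproj
        have hneg : ((i : ℤ) + 1) * b - a < 0 := by
          have hib : ((i : ℤ) + 1) * b < 0 := mul_neg_of_pos_of_neg (by positivity) hb
          linarith
        obtain ⟨u₁, hu₁⟩ := F1 _ hneg _ (G3 _ _ (π_mem _ u))
        rw [hu₁] at hproj
        have ht0 : t • ((z₁ ^ (n + 1) * t ^ i) • φ (fun j => algebraMap B A (c j))
            - z₁ ^ (n + 1 + 1) • u₁) = 0 := by
          rw [smul_sub, smul_smul, smul_smul,
            show t * (z₁ ^ (n + 1) * t ^ i) = z₁ ^ (n + 1) * t ^ (i + 1) by ring,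
            show t * z₁ ^ (n + 1 + 1) = z₁ ^ (n + 1 + 1) * t by ring,
            hproj, mul_smul]
          exact sub_self _
        have hcancel := hreg _ ht0
        exact ih u₁ (by rwa [sub_eq_zero] at hcancel)
    obtain ⟨u', hu'⟩ := KEY i (- φ w) E1
    obtain ⟨w', hw'⟩ := hsurj (- u')
    refine ⟨n + 1, w', Submodule.mem_sup_left ?_⟩
    rw [LinearMap.mem_ker, map_add, map_smul, map_smul, hu', hw', smul_neg, add_neg_cancel]
  -- Direction 2: C₀ ⊆ C_gen
  · rintro c ⟨n, w, hmem⟩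
    rw [Submodule.mem_sup] at hmem
    obtain ⟨κ, hκ, ρ, hρ, heq⟩ := hmem
    rw [Ideal.span_insert, Submodule.sup_smul, Submodule.mem_sup] at hρ
    obtain ⟨ρ₁, hρ₁, ρ₂, hρ₂, rfl⟩ := hρ
    rw [Submodule.ideal_span_singleton_smul, ← SetLike.mem_coe,
      Submodule.coe_pointwise_smul] at hρ₁ hρ₂
    obtain ⟨y, -, rfl⟩ := hρ₁
    obtain ⟨qv, -, rfl⟩ := hρ₂
    have E : z₁ ^ n • φ (fun j => algebraMap B A (c j)) + z₁ ^ (n + 1) • φ w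
        = z₂ • φ y + t • φ qv := by
      have h' := congrArg φ heq.symm
      simpa only [map_add, map_smul, LinearMap.mem_ker.mp hκ, zero_add, add_assoc] using h'
    have E1 : z₁ ^ (n + 1) • φ (fun j => algebraMap B A (c j)) + z₁ ^ (n + 1 + 1) • φ w
        = (z₁ ^ 1 * t ^ 1) • φ qv := by
      have h' := congrArg (fun v : M => z₁ • v) E
      simp only [smul_add, smul_smul] at h'
      rw [show z₁ * z₁ ^ n = z₁ ^ (n + 1) by ring,
        show z₁ * z₁ ^ (n + 1) = z₁ ^ (n + 1 + 1) by ring,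
        hzz, zero_smul, zero_add, show z₁ * t = z₁ ^ 1 * t ^ 1 by ring] at h'
      exact h'
    have hL : z₁ ^ (n + 1) • φ (fun j => algebraMap B A (c j)) ∈ Mgr (((n : ℤ) + 1) * a) := by
      have h' := hz₁p (n + 1) 0 _ (hφc c)
      rw [zero_add] at h'
      convert h' using 2
      push_cast; ring
    have hproj := congrArg (π (((n : ℤ) + 1) * a)) E1
    rw [π_add, π_same _ _ hL] at hproj
    have hR1 : π (((n : ℤ) + 1) * a) (z₁ ^ (n + 1 + 1) • φ w)
        = z₁ ^ (n + 1 + 1) • π (-a) (φ w) := by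
      have h' := hcomm_mono (n + 1 + 1) 0 (((n : ℤ) + 1) * a) (φ w)
      rw [pow_zero, mul_one] at h'
      convert h' using 3
      push_cast; ring
    have hR2 : π (((n : ℤ) + 1) * a) ((z₁ ^ 1 * t ^ 1) • φ qv)
        = (z₁ ^ 1 * t ^ 1) • π ((n : ℤ) * a - b) (φ qv) := by
      have h' := hcomm_mono 1 1 (((n : ℤ) + 1) * a) (φ qv)
      convert h' using 3
      push_cast; ring
    rw [hR1, hR2] at hproj
    obtain ⟨v₂, hv₂⟩ := F2 n ((n : ℤ) * a - b) (by linarith) _ (G3 _ _ (π_mem _ (φ qv)))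
    rw [hv₂, smul_smul,
      show z₁ ^ 1 * t ^ 1 * z₁ ^ (n + 1) = z₁ ^ (n + 1 + 1) * t by ring,
      mul_smul] at hproj
    obtain ⟨w', hw'⟩ := hsurj (π (-a) (φ w) - t • v₂)
    refine ⟨n + 1, 0, w', Submodule.mem_sup_left ?_⟩
    rw [LinearMap.mem_ker, map_add, map_smul, map_smul, hw', pow_zero, mul_one, smul_sub,
      ← hproj]
    abel

/-- (Lemma B of the paper.)  With `A = B[z₁, z₂, t]/(z₁z₂)` and a `G_m`-equivariant
quotient `φ : R = A^m → M` with `M` flat over `k[t]` (setup as in Lemma A): let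
`A⁻ = A/(z₂)`, `R⁻ = R ⊗_A A⁻`, `K⁻ = ker(R⁻ → M ⊗_A A⁻)`, and let
`C_gen ⊆ B^m` be the `B`-submodule with
`C_gen ⊗_B B[t,t⁻¹] = ((K⁻_{(t)})_{(z₁)} ∩ R⁻_{(t)}) ⊗ A⁻_{(t)}/(z₁)` inside
`B[t,t⁻¹]^m`; analogously let `C₀ ⊆ B^m` be defined from
`K₀⁻ = ker(R₀⁻ → M₀⁻)` at `t = 0` as `((K₀⁻)_{(z₁)} ∩ R₀⁻) ⊗ A₀⁻/(z₁)`.  Then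
`C₀ = C_gen` as `B`-submodules of `B^m`.

Formalization: since `z₁` and `t` act invertibly after localization and are regular on
`R⁻ = B[z₁,t]^m`, a constant vector `c ∈ B^m` lies in `C_gen` iff some
`z₁^n t^i c + z₁^{n+1} w` lies in `K⁻` (whose preimage in `R` is `K + z₂R`), and `c ∈ C₀`
iff some `z₁^n c + z₁^{n+1} w` lies in `K₀⁻` (preimage `K + (z₂, t)R`). -/
theorem generic_and_central_failure_of_flatness_agree
    (k : Type) [Field k] [IsAlgClosed k] [CharZero k]
    (B : Type) [CommRing B] [IsDomain B] [Algebra k B] [Algebra.FiniteType k B]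
    (a b : ℤ) (ha : 0 < a) (hb : b < 0)
    (m : ℕ)
    (M : Type) [AddCommGroup M]
    [Module (MvPolynomial (Fin 3) B ⧸
        Ideal.span {(MvPolynomial.X 0 : MvPolynomial (Fin 3) B) * MvPolynomial.X 1}) M]
    [Module B M]
    [IsScalarTower B (MvPolynomial (Fin 3) B ⧸
        Ideal.span {(MvPolynomial.X 0 : MvPolynomial (Fin 3) B) * MvPolynomial.X 1}) M]
    (Mgr : ℤ → Submodule B M) :
    letI A := MvPolynomial (Fin 3) B ⧸
        Ideal.span {(MvPolynomial.X 0 : MvPolynomial (Fin 3) B) * MvPolynomial.X 1}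
    letI z₁ : A := Ideal.Quotient.mk _ (MvPolynomial.X 0)
    letI z₂ : A := Ideal.Quotient.mk _ (MvPolynomial.X 1)
    letI t : A := Ideal.Quotient.mk _ (MvPolynomial.X 2)
    -- weight decomposition of the `G_m`-action:
    DirectSum.IsInternal Mgr →
    (∀ l, ∀ x ∈ Mgr l, z₁ • x ∈ Mgr (l + a)) →
    (∀ l, ∀ x ∈ Mgr l, z₂ • x ∈ Mgr l) →
    (∀ l, ∀ x ∈ Mgr l, t • x ∈ Mgr (l + b)) →
    -- `φ : R = A^m → M` a `G_m`-equivariant quotient: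
    ∀ φ : (Fin m → A) →ₗ[A] M, Function.Surjective φ →
    (∀ i, φ (Pi.single i 1) ∈ Mgr 0) →
    -- `M` is flat over `k[t]`:
    (letI : Module (Polynomial k) M :=
        Module.compHom M (Polynomial.aeval t : Polynomial k →ₐ[k] A).toRingHom
     Module.Flat (Polynomial k) M) →
    -- conclusion: `C_gen = C₀` inside `B^m`
    {c : Fin m → B | ∃ (n i : ℕ) (w : Fin m → A),
        ((z₁ ^ n * t ^ i) • fun j => algebraMap B A (c j)) + z₁ ^ (n + 1) • w ∈
          LinearMap.ker φ ⊔ (Ideal.span {z₂} • (⊤ : Submodule A (Fin m → A)))} =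
      {c : Fin m → B | ∃ (n : ℕ) (w : Fin m → A),
        (z₁ ^ n • fun j => algebraMap B A (c j)) + z₁ ^ (n + 1) • w ∈
          LinearMap.ker φ ⊔ (Ideal.span {z₂, t} • (⊤ : Submodule A (Fin m → A)))} := by
  intro hInt h1 h2 h3 φ hsurj hgen hflat
  refine aux_lemma B _ _ _ _ ?_ ?_ a b ha hb m M Mgr hInt h1 h2 h3 φ hsurj hgen ?_
  · -- z₁ * z₂ = 0
    rw [← map_mul, Ideal.Quotient.eq_zero_iff_mem]
    exact Ideal.subset_span rfl
  · -- every element is a B-combination of monomials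
    intro α
    obtain ⟨f, rfl⟩ := Ideal.Quotient.mk_surjective α
    induction f using MvPolynomial.induction_on' with
    | monomial u v =>
      have hmon : (Ideal.Quotient.mk (Ideal.span
            {(MvPolynomial.X 0 : MvPolynomial (Fin 3) B) * MvPolynomial.X 1})
            (MvPolynomial.monomial u v))
          = v • ((Ideal.Quotient.mk _ (MvPolynomial.X 0 : MvPolynomial (Fin 3) B)) ^ u 0 *
                 (Ideal.Quotient.mk _ (MvPolynomial.X 1 : MvPolynomial (Fin 3) B)) ^ u 1 *
                 (Ideal.Quotient.mk _ (MvPolynomial.X 2 : MvPolynomial (Fin 3) B)) ^ u 2) := by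
        rw [MvPolynomial.monomial_eq, Finsupp.prod_pow, Fin.prod_univ_three]
        simp only [map_mul, map_pow]
        exact (Algebra.smul_def (A := MvPolynomial (Fin 3) B ⧸ Ideal.span {(MvPolynomial.X 0 : MvPolynomial (Fin 3) B) * MvPolynomial.X 1}) v _).symm
      rw [hmon]
      exact Submodule.smul_mem _ _ (Submodule.subset_span ⟨u 0, u 2, u 1, rfl⟩)
    | add p q hp hq =>
      rw [map_add]
      exact add_mem hp hq
  · -- t-regularity from flatness over k[t]
    letI : Module (Polynomial k) M :=
      Module.compHom M (Polynomial.aeval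
        (Ideal.Quotient.mk (Ideal.span
          {(MvPolynomial.X 0 : MvPolynomial (Fin 3) B) * MvPolynomial.X 1})
          (MvPolynomial.X 2)) : Polynomial k →ₐ[k] _).toRingHom
    haveI : Module.Flat (Polynomial k) M := hflat
    intro x hx
    have hXreg : IsSMulRegular (Polynomial k) (Polynomial.X : Polynomial k) := by
      intro y z h
      simpa only [smul_eq_mul] using mul_left_cancel₀ Polynomial.X_ne_zero
        (by simpa only [smul_eq_mul] using h)
    have h2' := hXreg.lTensor (R := Polynomial k) (M := M) (M' := Polynomial k)
    have h3' : IsSMulRegular M (Polynomial.X : Polynomial k) :=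
      ((TensorProduct.rid (Polynomial k) M).isSMulRegular_congr
        (Polynomial.X : Polynomial k)).mp h2'
    have hXx : (Polynomial.X : Polynomial k) • x = 0 := by
      have hdef : (Polynomial.X : Polynomial k) • x
          = (Polynomial.aeval (Ideal.Quotient.mk (Ideal.span
              {(MvPolynomial.X 0 : MvPolynomial (Fin 3) B) * MvPolynomial.X 1})
              (MvPolynomial.X 2)) (Polynomial.X : Polynomial k)) • x := rfl
      rw [hdef, Polynomial.aeval_X]
      exact hx
    refine h3' ?_
    show (Polynomial.X : Polynomial k) • x = (Polynomial.X : Polynomial k) • (0 : M)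
    rw [hXx, smul_zero]
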